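/- Let p be an odd prime, m = (p-1)/2, and let F(z) = ∑_{j=0}^m binom(m,j)·binom(m+1,j)·z^j ∈ 𝔽_p[z] be the (truncated) hypergeometric polynomial F(-m, -m-1; 1; z). Then F satisfies the differential equation z(1−z)F''(z) + (1+2mz)F'(z) − m(m+1)F(z) = 0 over 𝔽_p, and consequently F has no multiple root z₀ with z₀ ≠ 0 and z₀ ≠ 1 in any field extension of 𝔽_p. -/

import Mathlib

open Polynomial

-- key scalar identity
lemma key_id {R : Type*} [CommRing R] (m n : ℕ) :
    ((n:R)+1)^2 * ((m.choose (n+1) : R) * ((m+1).choose (n+1) : R)) =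
      ((m:R)-n) * ((m:R)+1-n) * ((m.choose n : R) * ((m+1).choose n : R)) := by
  by_cases h : n ≤ m
  · have h1 := Nat.choose_succ_right_eq m n
    have h2 := Nat.choose_succ_right_eq (m+1) n
    have e1 : (m.choose (n+1) : R) * ((n:R)+1) = (m.choose n : R) * ((m:R)-(n:R)) := by
      have := congrArg (Nat.cast (R := R)) h1
      push_cast [Nat.cast_sub h] at this
      linear_combination this
    have e2 : ((m+1).choose (n+1) : R) * ((n:R)+1) = ((m+1).choose n : R) * ((m:R)+1-(n:R)) := by
      have := congrArg (Nat.cast (R := R)) h2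
      push_cast [Nat.cast_sub (le_trans h (Nat.le_succ m))] at this
      linear_combination this
    linear_combination (((m+1).choose (n+1) : R) * ((n:R)+1)) * e1 + ((m.choose n : R) * ((m:R)-(n:R))) * e2
  · push_neg at h
    rw [Nat.choose_eq_zero_of_lt (lt_trans h (Nat.lt_succ_self n)),
        Nat.choose_eq_zero_of_lt h]
    ring

-- general ODE over any comm ring
lemma ode {R : Type*} [CommRing R] (m : ℕ)
    (F : Polynomial R)
    (hF : F = ∑ j ∈ Finset.range (m + 1),
        Polynomial.C ((m.choose j : R) * ((m + 1).choose j : R)) * X ^ j) :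
    X * (1 - X) * derivative (derivative F)
        + (1 + C (2 * (m : R)) * X) * derivative F
        - C ((m : R) * ((m : R) + 1)) * F = 0 := by
  have hc : ∀ n, F.coeff n = (m.choose n : R) * ((m+1).choose n : R) := by
    intro n
    rw [hF, finset_sum_coeff]
    simp only [coeff_C_mul, coeff_X_pow, mul_ite, mul_one, mul_zero]
    rw [Finset.sum_ite_eq (Finset.range (m+1)) n]
    by_cases h : n ≤ m
    · simp [Finset.mem_range, Nat.lt_succ_of_le h]
    · push_neg at h
      simp [Finset.mem_range, Nat.choose_eq_zero_of_lt h, not_lt.mpr (show m + 1 ≤ n from h)]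
  have expand : X * (1 - X) * derivative (derivative F)
        + (1 + C (2 * (m : R)) * X) * derivative F
        - C ((m : R) * ((m : R) + 1)) * F
      = (X * derivative (derivative F) - X * (X * derivative (derivative F)))
        + (derivative F + C (2 * (m : R)) * (X * derivative F))
        - C ((m : R) * ((m : R) + 1)) * F := by ring
  rw [expand]
  ext n
  rcases n with _ | n
  · simp only [coeff_sub, coeff_add, mul_coeff_zero, coeff_X_zero, zero_mul,
      coeff_derivative, hc, coeff_C_mul, coeff_zero, coeff_C]
    have := key_id (R := R) m 0
    push_cast at this ⊢
    linear_combination this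
  · rcases n with _ | n
    · simp only [coeff_sub, coeff_add, coeff_X_mul, mul_coeff_zero, coeff_X_zero, zero_mul,
        coeff_derivative, hc, coeff_C_mul, coeff_zero]
      have h1 := key_id (R := R) m 1
      have h0 := key_id (R := R) m 0
      push_cast at h1 h0 ⊢
      linear_combination h1
    · simp only [coeff_sub, coeff_add, coeff_X_mul, coeff_derivative, hc, coeff_C_mul, coeff_zero]
      have h2 := key_id (R := R) m (n+2)
      push_cast at h2 ⊢
      linear_combination h2

theorem stmt_17 (p : ℕ) (hp : p.Prime) (hodd : p ≠ 2) :
    let m := (p - 1) / 2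
    let F : Polynomial (ZMod p) :=
      ∑ j ∈ Finset.range (m + 1),
        Polynomial.C ((m.choose j : ZMod p) * ((m + 1).choose j : ZMod p)) * X ^ j
    (X * (1 - X) * Polynomial.derivative (Polynomial.derivative F)
        + (1 + Polynomial.C (2 * (m : ZMod p)) * X) * Polynomial.derivative F
        - Polynomial.C ((m : ZMod p) * ((m : ZMod p) + 1)) * F = 0) ∧
    ∀ (K : Type) [Field K] [Algebra (ZMod p) K] (z : K), z ≠ 0 → z ≠ 1 →
      ¬ ((X - Polynomial.C z) ^ 2 ∣ F.map (algebraMap (ZMod p) K)) := by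
  intro m F
  haveI : Fact p.Prime := ⟨hp⟩
  refine ⟨ode m F rfl, ?_⟩
  intro K _ _ z hz0 hz1 hdvd
  set φ := algebraMap (ZMod p) K with hφ
  have hφinj : Function.Injective φ := φ.injective
  haveI : CharP K p := charP_of_injective_algebraMap hφinj p
  set G := F.map φ with hGdef'
  have hGdef : G = ∑ j ∈ Finset.range (m + 1),
      Polynomial.C ((m.choose j : K) * ((m + 1).choose j : K)) * X ^ j := by
    rw [hGdef', show F = ∑ j ∈ Finset.range (m + 1),
        Polynomial.C ((m.choose j : ZMod p) * ((m + 1).choose j : ZMod p)) * X ^ j from rfl]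
    simp only [Polynomial.map_sum, Polynomial.map_mul, Polynomial.map_pow,
      Polynomial.map_C, Polynomial.map_X, map_mul, map_natCast, Polynomial.map_natCast]
  have hodeK := ode (R := K) m G hGdef
  have hF0 : F ≠ 0 := by
    intro h
    have h0 : F.coeff 0 = 1 := by
      rw [show F = ∑ j ∈ Finset.range (m + 1),
        Polynomial.C ((m.choose j : ZMod p) * ((m + 1).choose j : ZMod p)) * X ^ j from rfl]
      rw [finset_sum_coeff]
      simp only [coeff_C_mul, coeff_X_pow, mul_ite, mul_one, mul_zero]
      rw [Finset.sum_ite_eq (Finset.range (m+1)) 0]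
      simp
    rw [h] at h0; simp at h0
  have hG0 : G ≠ 0 := (Polynomial.map_ne_zero_iff hφinj).mpr hF0
  set μ := rootMultiplicity z G with hμdef
  have hμ2 : 2 ≤ μ := (le_rootMultiplicity_iff hG0).mpr hdvd
  obtain ⟨ν, hν⟩ : ∃ ν, μ = ν + 2 := ⟨μ - 2, by omega⟩
  obtain ⟨H, hH⟩ : (X - C z) ^ (ν + 2) ∣ G := by
    rw [← hν]; exact pow_rootMultiplicity_dvd G z
  have hnd : ¬ (X - C z) ^ (ν + 3) ∣ G := by
    have := pow_rootMultiplicity_not_dvd hG0 z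
    rwa [← hμdef, hν, show ν + 2 + 1 = ν + 3 from rfl] at this
  set q : K[X] := X - C z with hq
  have hq0 : q ≠ 0 := X_sub_C_ne_zero z
  have hqd : derivative q = 1 := by simp [hq]
  -- degree bounds
  have hdegF : F.natDegree ≤ m := by
    apply Polynomial.natDegree_sum_le_of_forall_le
    intro j hj
    exact le_trans (natDegree_C_mul_X_pow_le _ _) (Nat.lt_succ_iff.mp (Finset.mem_range.mp hj))
  have hdegG : G.natDegree ≤ m := le_trans natDegree_map_le hdegF
  have hμle : ν + 2 ≤ G.natDegree := by
    have := Polynomial.natDegree_le_of_dvd ⟨H, hH⟩ hG0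
    simpa [natDegree_pow, hq, natDegree_X_sub_C] using this
  have hmp : m < p := lt_of_le_of_lt (Nat.div_le_self _ _) (by have := hp.two_le; omega)
  -- derivatives
  have e1 : derivative G = C ((ν+2 : ℕ) : K) * q ^ (ν+1) * H + q ^ (ν+2) * derivative H := by
    rw [hH]
    rw [derivative_mul, derivative_pow, hqd]
    simp only [C_eq_natCast]
    push_cast
    ring
  have e2 : derivative (derivative G) =
      C (((ν+2)*(ν+1) : ℕ) : K) * (q ^ ν * H)
        + q ^ (ν+1) * (C ((2*(ν+2) : ℕ) : K) * derivative H + q * derivative (derivative H)) := by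
    rw [e1]
    rw [derivative_add, derivative_mul, derivative_mul, derivative_mul,
      derivative_pow, derivative_pow, hqd]
    simp only [C_eq_natCast, derivative_natCast]
    push_cast
    ring
  -- divisibility of G'
  have hdG : q ^ (ν+1) ∣ derivative G := by
    rw [e1]
    exact dvd_add ⟨C ((ν+2 : ℕ) : K) * H, by ring⟩ ⟨q * derivative H, by ring⟩
  have hGdvd : q ^ (ν+1) ∣ G := ⟨q * H, by rw [hH]; ring⟩
  -- ODE gives divisibility of X(1-X)G''
  have hrw : X * (1 - X) * derivative (derivative G)
      = C ((m : K) * ((m : K) + 1)) * G - (1 + C (2 * (m : K)) * X) * derivative G := by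
    linear_combination hodeK
  have hBdvd : q ^ (ν+1) ∣ X * (1 - X) * derivative (derivative G) := by
    rw [hrw]
    exact dvd_sub (Dvd.dvd.mul_left hGdvd _) (Dvd.dvd.mul_left hdG _)
  -- coprimality
  have c1 : IsCoprime (X : K[X]) q := by
    have : IsCoprime (X - C (0:K)) (X - C z) :=
      isCoprime_X_sub_C_of_isUnit_sub (by simpa using (isUnit_iff_ne_zero.mpr (neg_ne_zero.mpr hz0)))
    simpa [hq] using this
  have c2 : IsCoprime (1 - X : K[X]) q := by
    have h1 : IsCoprime (X - C (1:K)) (X - C z) :=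
      isCoprime_X_sub_C_of_isUnit_sub (isUnit_iff_ne_zero.mpr (sub_ne_zero_of_ne (fun h => hz1 h.symm)))
    have := h1.neg_left
    simpa [hq, neg_sub] using this
  have c4 : IsCoprime (q ^ (ν+1)) (X * (1 - X)) := ((c1.mul_left c2).symm.pow_left)
  have hCdvd : q ^ (ν+1) ∣ derivative (derivative G) :=
    c4.dvd_of_dvd_mul_left hBdvd
  -- extract q ∣ H
  have hDdvd : q ^ (ν+1) ∣ C (((ν+2)*(ν+1) : ℕ) : K) * (q ^ ν * H) := by
    have h5 : q ^ (ν+1) ∣ q ^ (ν+1) * (C ((2*(ν+2) : ℕ) : K) * derivative H + q * derivative (derivative H)) :=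
      Dvd.intro _ rfl
    have := dvd_sub hCdvd h5
    rwa [e2, add_sub_cancel_right] at this
  have hk : (((ν+2)*(ν+1) : ℕ) : K) ≠ 0 := by
    rw [Ne, CharP.cast_eq_zero_iff K p]
    intro hdv
    rcases (Nat.Prime.dvd_mul hp).mp hdv with h | h
    · exact absurd (Nat.le_of_dvd (by omega) h) (by omega)
    · exact absurd (Nat.le_of_dvd (by omega) h) (by omega)
  have hqH : q ∣ H := by
    have h6 : q ^ ν * q ∣ q ^ ν * (C (((ν+2)*(ν+1) : ℕ) : K) * H) := by
      rw [← pow_succ]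
      exact hDdvd.trans (dvd_of_eq (by ring))
    have h7 : q ∣ C (((ν+2)*(ν+1) : ℕ) : K) * H :=
      (mul_dvd_mul_iff_left (pow_ne_zero ν hq0)).mp h6
    have h8 : q ∣ C ((((ν+2)*(ν+1) : ℕ) : K)⁻¹) * (C (((ν+2)*(ν+1) : ℕ) : K) * H) :=
      h7.mul_left _
    rwa [← mul_assoc, ← C_mul, inv_mul_cancel₀ hk, C_1, one_mul] at h8
  obtain ⟨H', hH'⟩ := hqH
  exact hnd ⟨H', by rw [hH, hH']; ring⟩
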